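/- The columns of the Kelvin matrix satisfy the identities (α₁−α₂) x/|x|² = ∂₁(Γ(x)e₁) + ∂₂(Γ(x)e₂) and (α₁+α₂) x^⊥/|x|² = ∂₁(Γ(x)e₂) − ∂₂(Γ(x)e₁) for all x ≠ 0, where x^⊥ = (−x₂, x₁). -/

import Mathlib

open Real

/-- Partial derivative in the `j`-th coordinate direction of a function on `ℝ × ℝ`. -/
noncomputable def pd (j : Fin 2) (f : ℝ × ℝ → ℝ) (p : ℝ × ℝ) : ℝ :=
  if j = 0 then deriv (fun t => f (t, p.2)) p.1 else deriv (fun t => f (p.1, t)) p.2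

/-- The `j`-th coordinate of a point of `ℝ × ℝ`. -/
def co (j : Fin 2) (p : ℝ × ℝ) : ℝ := if j = 0 then p.1 else p.2

/-- The squared Euclidean norm on `ℝ × ℝ`. -/
def nsq (p : ℝ × ℝ) : ℝ := p.1 ^ 2 + p.2 ^ 2

/-- The Kelvin matrix `Γ_{ij}(x) = α₁ δ_{ij} ln|x| − α₂ x_i x_j / |x|²`. -/
noncomputable def Gam (α₁ α₂ : ℝ) (i j : Fin 2) (p : ℝ × ℝ) : ℝ :=
  α₁ * (if i = j then 1 else 0) * Real.log (Real.sqrt (nsq p)) - α₂ * co i p * co j p / nsq p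
open Real

lemma hDsq (a c : ℝ) : HasDerivAt (fun t : ℝ => t ^ 2 + c ^ 2) (2 * a) a := by
  simpa using (hasDerivAt_pow 2 a).add_const (c ^ 2)

lemma hDsq' (a c : ℝ) : HasDerivAt (fun t : ℝ => c ^ 2 + t ^ 2) (2 * a) a := by
  simpa using (hasDerivAt_pow 2 a).const_add (c ^ 2)

lemma hDlog (a c : ℝ) (h : a ^ 2 + c ^ 2 ≠ 0) :
    HasDerivAt (fun t : ℝ => Real.log (Real.sqrt (t ^ 2 + c ^ 2))) (a / (a ^ 2 + c ^ 2)) a := by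
  have he : (fun t : ℝ => Real.log (Real.sqrt (t ^ 2 + c ^ 2)))
      = fun t : ℝ => Real.log (t ^ 2 + c ^ 2) / 2 := by
    funext t; rw [Real.log_sqrt (by positivity)]
  rw [he]
  have := (((hDsq a c).log h).div_const 2)
  convert this using 1
  rotate_right
  field_simp
  try ring
  try tauto
  all_goals rfl

lemma hDlog' (a c : ℝ) (h : c ^ 2 + a ^ 2 ≠ 0) :
    HasDerivAt (fun t : ℝ => Real.log (Real.sqrt (c ^ 2 + t ^ 2))) (a / (c ^ 2 + a ^ 2)) a := by
  have he : (fun t : ℝ => Real.log (Real.sqrt (c ^ 2 + t ^ 2)))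
      = fun t : ℝ => Real.log (c ^ 2 + t ^ 2) / 2 := by
    funext t; rw [Real.log_sqrt (by positivity)]
  rw [he]
  have := (((hDsq' a c).log h).div_const 2)
  convert this using 1
  rotate_right
  field_simp
  try ring
  try tauto
  all_goals rfl

-- A : pd0 Γ00
lemma dA (α₁ α₂ a c : ℝ) (h : a ^ 2 + c ^ 2 ≠ 0) :
    deriv (fun t : ℝ => α₁ * Real.log (Real.sqrt (t ^ 2 + c ^ 2)) - α₂ * (t * t) / (t ^ 2 + c ^ 2)) a
      = α₁ * a / (a ^ 2 + c ^ 2) - α₂ * (2 * a * c ^ 2) / (a ^ 2 + c ^ 2) ^ 2 := by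
  have h1 := ((hDlog a c h).const_mul α₁)
  have h2 : HasDerivAt (fun t : ℝ => α₂ * (t * t) / (t ^ 2 + c ^ 2))
      ((α₂ * (a + a) * (a ^ 2 + c ^ 2) - α₂ * (a * a) * (2 * a)) / (a ^ 2 + c ^ 2) ^ 2) a := by
    simpa [Pi.div_def] using (((hasDerivAt_id a).mul (hasDerivAt_id a)).const_mul α₂).div (hDsq a c) h
  erw [(h1.sub h2).deriv]
  field_simp
  try ring
  try tauto

-- B : pd1 Γ11
lemma dB (α₁ α₂ a c : ℝ) (h : c ^ 2 + a ^ 2 ≠ 0) :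
    deriv (fun t : ℝ => α₁ * Real.log (Real.sqrt (c ^ 2 + t ^ 2)) - α₂ * (t * t) / (c ^ 2 + t ^ 2)) a
      = α₁ * a / (c ^ 2 + a ^ 2) - α₂ * (2 * a * c ^ 2) / (c ^ 2 + a ^ 2) ^ 2 := by
  have h1 := ((hDlog' a c h).const_mul α₁)
  have h2 : HasDerivAt (fun t : ℝ => α₂ * (t * t) / (c ^ 2 + t ^ 2))
      ((α₂ * (a + a) * (c ^ 2 + a ^ 2) - α₂ * (a * a) * (2 * a)) / (c ^ 2 + a ^ 2) ^ 2) a := by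
    simpa [Pi.div_def] using (((hasDerivAt_id a).mul (hasDerivAt_id a)).const_mul α₂).div (hDsq' a c) h
  erw [(h1.sub h2).deriv]
  field_simp
  try ring
  try tauto

-- C : pd0 of off-diagonal (variable in first slot): fun t => -(α₂ * (t * c) / (t²+c²))
lemma dC (α₂ a c : ℝ) (h : a ^ 2 + c ^ 2 ≠ 0) :
    deriv (fun t : ℝ => -(α₂ * (t * c) / (t ^ 2 + c ^ 2))) a
      = -(α₂ * c * (c ^ 2 - a ^ 2)) / (a ^ 2 + c ^ 2) ^ 2 := by
  have h2 : HasDerivAt (fun t : ℝ => α₂ * (t * c) / (t ^ 2 + c ^ 2))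
      ((α₂ * c * (a ^ 2 + c ^ 2) - α₂ * (a * c) * (2 * a)) / (a ^ 2 + c ^ 2) ^ 2) a := by
    have : HasDerivAt (fun t : ℝ => α₂ * (t * c)) (α₂ * c) a := by
      simpa using (((hasDerivAt_id a).mul_const c).const_mul α₂)
    exact this.div (hDsq a c) h
  erw [h2.neg.deriv]
  field_simp
  try ring
  try tauto

-- D : variable in second slot: fun t => -(α₂ * (c * t) / (c²+t²))
lemma dD (α₂ a c : ℝ) (h : c ^ 2 + a ^ 2 ≠ 0) :
    deriv (fun t : ℝ => -(α₂ * (c * t) / (c ^ 2 + t ^ 2))) a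
      = -(α₂ * c * (c ^ 2 - a ^ 2)) / (c ^ 2 + a ^ 2) ^ 2 := by
  have h2 : HasDerivAt (fun t : ℝ => α₂ * (c * t) / (c ^ 2 + t ^ 2))
      ((α₂ * c * (c ^ 2 + a ^ 2) - α₂ * (c * a) * (2 * a)) / (c ^ 2 + a ^ 2) ^ 2) a := by
    have : HasDerivAt (fun t : ℝ => α₂ * (c * t)) (α₂ * c) a := by
      simpa [mul_comm, mul_assoc] using (((hasDerivAt_id a).const_mul c).const_mul α₂)
    exact this.div (hDsq' a c) h
  erw [h2.neg.deriv]
  field_simp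
  try ring
  try tauto

-- E : pd0 Γ11 : fun t => α₁ log √(t²+c²) - α₂ (c*c)/(t²+c²)
lemma dE (α₁ α₂ a c : ℝ) (h : a ^ 2 + c ^ 2 ≠ 0) :
    deriv (fun t : ℝ => α₁ * Real.log (Real.sqrt (t ^ 2 + c ^ 2)) - α₂ * (c * c) / (t ^ 2 + c ^ 2)) a
      = α₁ * a / (a ^ 2 + c ^ 2) + α₂ * (2 * a * c ^ 2) / (a ^ 2 + c ^ 2) ^ 2 := by
  have h1 := ((hDlog a c h).const_mul α₁)
  have h2 : HasDerivAt (fun t : ℝ => α₂ * (c * c) / (t ^ 2 + c ^ 2))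
      ((0 * (a ^ 2 + c ^ 2) - α₂ * (c * c) * (2 * a)) / (a ^ 2 + c ^ 2) ^ 2) a :=
    (hasDerivAt_const a (α₂ * (c * c))).div (hDsq a c) h
  erw [(h1.sub h2).deriv]
  field_simp
  try ring
  try tauto

-- F : pd1 Γ00 : fun t => α₁ log √(c²+t²) - α₂ (c*c)/(c²+t²)
lemma dF (α₁ α₂ a c : ℝ) (h : c ^ 2 + a ^ 2 ≠ 0) :
    deriv (fun t : ℝ => α₁ * Real.log (Real.sqrt (c ^ 2 + t ^ 2)) - α₂ * (c * c) / (c ^ 2 + t ^ 2)) a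
      = α₁ * a / (c ^ 2 + a ^ 2) + α₂ * (2 * a * c ^ 2) / (c ^ 2 + a ^ 2) ^ 2 := by
  have h1 := ((hDlog' a c h).const_mul α₁)
  have h2 : HasDerivAt (fun t : ℝ => α₂ * (c * c) / (c ^ 2 + t ^ 2))
      ((0 * (c ^ 2 + a ^ 2) - α₂ * (c * c) * (2 * a)) / (c ^ 2 + a ^ 2) ^ 2) a :=
    (hasDerivAt_const a (α₂ * (c * c))).div (hDsq' a c) h
  erw [(h1.sub h2).deriv]
  field_simp
  try ring
  try tauto

theorem stmt1 (lam mu α₁ α₂ : ℝ) (hmu : 0 < mu) (hlm : 0 < lam + mu)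
    (hα₁ : α₁ = (1 / (4 * π)) * (1 / mu + 1 / (lam + 2 * mu)))
    (hα₂ : α₂ = (1 / (4 * π)) * (1 / mu - 1 / (lam + 2 * mu))) :
    ∀ x : ℝ × ℝ, x ≠ 0 → ∀ i : Fin 2,
      ((α₁ - α₂) * co i x / nsq x
          = pd 0 (Gam α₁ α₂ i 0) x + pd 1 (Gam α₁ α₂ i 1) x)
      ∧ ((α₁ + α₂) * (if i = 0 then -x.2 else x.1) / nsq x
          = pd 0 (Gam α₁ α₂ i 1) x - pd 1 (Gam α₁ α₂ i 0) x) := by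
  intro x hx i
  have hx' : x.1 ≠ 0 ∨ x.2 ≠ 0 := by
    by_contra hc
    push_neg at hc
    exact hx (Prod.ext hc.1 hc.2)
  have hS : x.1 ^ 2 + x.2 ^ 2 ≠ 0 := by
    rcases hx' with h | h <;> positivity
  have hS' : x.2 ^ 2 + x.1 ^ 2 ≠ 0 := by rw [add_comm]; exact hS
  have e00 : pd 0 (Gam α₁ α₂ 0 0) x
      = α₁ * x.1 / (x.1 ^ 2 + x.2 ^ 2) - α₂ * (2 * x.1 * x.2 ^ 2) / (x.1 ^ 2 + x.2 ^ 2) ^ 2 := by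
    have he : (fun t => Gam α₁ α₂ 0 0 (t, x.2))
        = fun t : ℝ => α₁ * Real.log (Real.sqrt (t ^ 2 + x.2 ^ 2)) - α₂ * (t * t) / (t ^ 2 + x.2 ^ 2) := by
      funext t; simp [Gam, co, nsq]; ring
    rw [show pd 0 (Gam α₁ α₂ 0 0) x = deriv (fun t => Gam α₁ α₂ 0 0 (t, x.2)) x.1 from rfl, he,
      dA α₁ α₂ x.1 x.2 hS]
  have e11 : pd 1 (Gam α₁ α₂ 1 1) x
      = α₁ * x.2 / (x.1 ^ 2 + x.2 ^ 2) - α₂ * (2 * x.2 * x.1 ^ 2) / (x.1 ^ 2 + x.2 ^ 2) ^ 2 := by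
    have he : (fun t => Gam α₁ α₂ 1 1 (x.1, t))
        = fun t : ℝ => α₁ * Real.log (Real.sqrt (x.1 ^ 2 + t ^ 2)) - α₂ * (t * t) / (x.1 ^ 2 + t ^ 2) := by
      funext t; simp [Gam, co, nsq]; ring
    rw [show pd 1 (Gam α₁ α₂ 1 1) x = deriv (fun t => Gam α₁ α₂ 1 1 (x.1, t)) x.2 from rfl, he,
      dB α₁ α₂ x.2 x.1 hS]
  have e01a : pd 0 (Gam α₁ α₂ 0 1) x
      = -(α₂ * x.2 * (x.2 ^ 2 - x.1 ^ 2)) / (x.1 ^ 2 + x.2 ^ 2) ^ 2 := by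
    have he : (fun t => Gam α₁ α₂ 0 1 (t, x.2))
        = fun t : ℝ => -(α₂ * (t * x.2) / (t ^ 2 + x.2 ^ 2)) := by
      funext t; simp [Gam, co, nsq]; ring
    rw [show pd 0 (Gam α₁ α₂ 0 1) x = deriv (fun t => Gam α₁ α₂ 0 1 (t, x.2)) x.1 from rfl, he,
      dC α₂ x.1 x.2 hS]
  have e01b : pd 1 (Gam α₁ α₂ 0 1) x
      = -(α₂ * x.1 * (x.1 ^ 2 - x.2 ^ 2)) / (x.1 ^ 2 + x.2 ^ 2) ^ 2 := by
    have he : (fun t => Gam α₁ α₂ 0 1 (x.1, t))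
        = fun t : ℝ => -(α₂ * (x.1 * t) / (x.1 ^ 2 + t ^ 2)) := by
      funext t; simp [Gam, co, nsq]; ring
    rw [show pd 1 (Gam α₁ α₂ 0 1) x = deriv (fun t => Gam α₁ α₂ 0 1 (x.1, t)) x.2 from rfl, he,
      dD α₂ x.2 x.1 hS]
  have e10a : pd 0 (Gam α₁ α₂ 1 0) x
      = -(α₂ * x.2 * (x.2 ^ 2 - x.1 ^ 2)) / (x.1 ^ 2 + x.2 ^ 2) ^ 2 := by
    have he : (fun t => Gam α₁ α₂ 1 0 (t, x.2))
        = fun t : ℝ => -(α₂ * (t * x.2) / (t ^ 2 + x.2 ^ 2)) := by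
      funext t; simp [Gam, co, nsq]; ring
    rw [show pd 0 (Gam α₁ α₂ 1 0) x = deriv (fun t => Gam α₁ α₂ 1 0 (t, x.2)) x.1 from rfl, he,
      dC α₂ x.1 x.2 hS]
  have e10b : pd 1 (Gam α₁ α₂ 1 0) x
      = -(α₂ * x.1 * (x.1 ^ 2 - x.2 ^ 2)) / (x.1 ^ 2 + x.2 ^ 2) ^ 2 := by
    have he : (fun t => Gam α₁ α₂ 1 0 (x.1, t))
        = fun t : ℝ => -(α₂ * (x.1 * t) / (x.1 ^ 2 + t ^ 2)) := by
      funext t; simp [Gam, co, nsq]; ring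
    rw [show pd 1 (Gam α₁ α₂ 1 0) x = deriv (fun t => Gam α₁ α₂ 1 0 (x.1, t)) x.2 from rfl, he,
      dD α₂ x.2 x.1 hS]
  have e11a : pd 0 (Gam α₁ α₂ 1 1) x
      = α₁ * x.1 / (x.1 ^ 2 + x.2 ^ 2) + α₂ * (2 * x.1 * x.2 ^ 2) / (x.1 ^ 2 + x.2 ^ 2) ^ 2 := by
    have he : (fun t => Gam α₁ α₂ 1 1 (t, x.2))
        = fun t : ℝ => α₁ * Real.log (Real.sqrt (t ^ 2 + x.2 ^ 2)) - α₂ * (x.2 * x.2) / (t ^ 2 + x.2 ^ 2) := by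
      funext t; simp [Gam, co, nsq]; ring
    rw [show pd 0 (Gam α₁ α₂ 1 1) x = deriv (fun t => Gam α₁ α₂ 1 1 (t, x.2)) x.1 from rfl, he,
      dE α₁ α₂ x.1 x.2 hS]
  have e00b : pd 1 (Gam α₁ α₂ 0 0) x
      = α₁ * x.2 / (x.1 ^ 2 + x.2 ^ 2) + α₂ * (2 * x.2 * x.1 ^ 2) / (x.1 ^ 2 + x.2 ^ 2) ^ 2 := by
    have he : (fun t => Gam α₁ α₂ 0 0 (x.1, t))
        = fun t : ℝ => α₁ * Real.log (Real.sqrt (x.1 ^ 2 + t ^ 2)) - α₂ * (x.1 * x.1) / (x.1 ^ 2 + t ^ 2) := by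
      funext t; simp [Gam, co, nsq]; ring
    rw [show pd 1 (Gam α₁ α₂ 0 0) x = deriv (fun t => Gam α₁ α₂ 0 0 (x.1, t)) x.2 from rfl, he,
      dF α₁ α₂ x.2 x.1 hS]
  have hi : i = 0 ∨ i = 1 := by fin_cases i; exacts [Or.inl rfl, Or.inr rfl]
  rcases hi with rfl | rfl
  · constructor
    · rw [e00, e01b]
      simp only [co, nsq, if_pos rfl, if_true]
      field_simp
      ring
    · rw [e01a, e00b]
      simp only [nsq, if_pos rfl, if_true]
      field_simp
      ring
  · constructor
    · rw [e10a, e11]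
      simp only [co, nsq]
      norm_num
      field_simp
      ring
    · rw [e11a, e10b]
      simp only [nsq]
      norm_num
      field_simp
      ring
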